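/- For every real number t, one has the modulus identity 2·|cos(π·(1/2 + i·t)/2)| · |Γ(1/2 + i·t)| = √(2π); equivalently |(2π)^{(1/2 + i·t)}| = |2·cos(π·(1/2 + i·t)/2)·Γ(1/2 + i·t)|, so that the quantity (2π)^s/(2·cos(πs/2)·Γ(s)) has absolute value one for every s on the critical line. -/

import Mathlib

open Complex Real

theorem abs_two_cos_mul_Gamma_critical_line (t : ℝ) :
    2 * ‖Complex.cos (Real.pi * (1 / 2 + Complex.I * t) / 2)‖ *
        ‖Complex.Gamma (1 / 2 + Complex.I * t)‖ =
      Real.sqrt (2 * Real.pi) := by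
  have hc : (0:ℝ) < Real.cosh (Real.pi * t) := Real.cosh_pos _
  set s : ℂ := 1/2 + Complex.I * t with hs
  have hconj : (starRingEnd ℂ) s = 1 - s := by
    simp only [hs, map_add, map_mul, map_div₀, map_one, map_ofNat, Complex.conj_I,
      Complex.conj_ofReal]
    ring
  -- Gamma part
  have hGamma2 : (‖Complex.Gamma s‖)^2 = Real.pi / Real.cosh (Real.pi * t) := by
    have h1 := Complex.Gamma_mul_Gamma_one_sub s
    rw [← hconj, Complex.Gamma_conj, Complex.mul_conj] at h1
    have hsin : Complex.sin (Real.pi * s) = Real.cosh (Real.pi * t) := by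
      have : (Real.pi : ℂ) * s = Real.pi/2 + (Real.pi * t : ℝ) * Complex.I := by
        rw [hs]; push_cast; ring
      rw [this, Complex.sin_add, Complex.sin_pi_div_two, Complex.cos_pi_div_two,
        Complex.cos_mul_I, Complex.ofReal_cosh]
      ring
    rw [hsin] at h1
    have h2 : (Complex.normSq (Complex.Gamma s) : ℂ) =
        ((Real.pi / Real.cosh (Real.pi * t) : ℝ) : ℂ) := by
      rw [h1]; push_cast; ring
    have h3 := Complex.ofReal_inj.mp h2
    rw [← Complex.sq_norm] at h3
    exact h3
  -- cos part
  have hcos2 : (‖Complex.cos (Real.pi * s / 2)‖)^2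
      = Real.cosh (Real.pi * t) / 2 := by
    have h1 : Complex.cos (Real.pi * s / 2) * (starRingEnd ℂ) (Complex.cos (Real.pi * s / 2))
        = (Complex.normSq (Complex.cos (Real.pi * s / 2)) : ℂ) := Complex.mul_conj _
    rw [← Complex.cos_conj, map_div₀, map_mul, Complex.conj_ofReal, hconj, map_ofNat] at h1
    have key : Complex.cos (Real.pi * s / 2) * Complex.cos ((Real.pi : ℂ) * (1 - s) / 2
        ) = Real.cosh (Real.pi * t) / 2 := by
      have ha : (Real.pi : ℂ) * s / 2 = Real.pi/4 + (Real.pi * t : ℝ) * Complex.I / 2 := by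
        rw [hs]; push_cast; ring
      have hb : (Real.pi : ℂ) * (1 - s) / 2 = Real.pi/4 - (Real.pi * t : ℝ) * Complex.I / 2 := by
        rw [hs]; push_cast; ring
      rw [ha, hb, Complex.cos_add, Complex.cos_sub]
      have h4 : Complex.cos ((Real.pi:ℂ)/4) ^ 2 = 1/2 := by
        have hr : (Real.cos (Real.pi/4))^2 = 1/2 := by
          rw [Real.cos_pi_div_four, div_pow, Real.sq_sqrt (by norm_num : (0:ℝ) ≤ 2)]
          norm_num
        rw [show ((Real.pi:ℂ)/4) = ((Real.pi/4 : ℝ) : ℂ) by push_cast; ring,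
          ← Complex.ofReal_cos, ← Complex.ofReal_pow, hr]
        norm_num
      have h5 : Complex.sin ((Real.pi:ℂ)/4) ^ 2 = 1/2 := by
        have h := Complex.sin_sq_add_cos_sq ((Real.pi:ℂ)/4)
        linear_combination h - h4
      have h6 : Complex.cos ((Real.pi * t : ℝ) * Complex.I / 2) ^ 2
          - Complex.sin ((Real.pi * t : ℝ) * Complex.I / 2) ^ 2
          = Real.cosh (Real.pi * t) := by
        have h7 : Complex.cos ((Real.pi * t : ℝ) * Complex.I / 2) ^ 2
            - Complex.sin ((Real.pi * t : ℝ) * Complex.I / 2) ^ 2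
            = Complex.cos (2 * ((Real.pi * t : ℝ) * Complex.I / 2)) := by
          linear_combination -(Complex.cos_two_mul ((Real.pi * t : ℝ) * Complex.I / 2))
            - (Complex.sin_sq_add_cos_sq ((Real.pi * t : ℝ) * Complex.I / 2))
        rw [h7, show (2:ℂ) * ((Real.pi * t : ℝ) * Complex.I / 2) = (Real.pi * t : ℝ) * Complex.I by
          ring, Complex.cos_mul_I, Complex.ofReal_cosh]
      calc (Complex.cos ((Real.pi:ℂ)/4) * Complex.cos ((Real.pi * t : ℝ) * Complex.I / 2) -
            Complex.sin ((Real.pi:ℂ)/4) * Complex.sin ((Real.pi * t : ℝ) * Complex.I / 2)) *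
          (Complex.cos ((Real.pi:ℂ)/4) * Complex.cos ((Real.pi * t : ℝ) * Complex.I / 2) +
            Complex.sin ((Real.pi:ℂ)/4) * Complex.sin ((Real.pi * t : ℝ) * Complex.I / 2))
          = Complex.cos ((Real.pi:ℂ)/4)^2 * Complex.cos ((Real.pi * t : ℝ) * Complex.I / 2)^2
            - Complex.sin ((Real.pi:ℂ)/4)^2 * Complex.sin ((Real.pi * t : ℝ) * Complex.I / 2)^2
            := by ring
        _ = ((Real.cosh (Real.pi * t) : ℝ) : ℂ) / 2 := by rw [h4, h5, ← h6]; ring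
        _ = _ := by push_cast; ring
    rw [key] at h1
    have h2 : (Complex.normSq (Complex.cos (Real.pi * s / 2)) : ℂ)
        = ((Real.cosh (Real.pi * t) / 2 : ℝ) : ℂ) := by rw [← h1]; push_cast; ring
    have h3 := Complex.ofReal_inj.mp h2
    rw [← Complex.sq_norm] at h3
    exact h3
  -- combine
  have hnn : 0 ≤ 2 * ‖Complex.cos (Real.pi * s / 2)‖ *
      ‖Complex.Gamma s‖ := by positivity
  have hsq : (2 * ‖Complex.cos (Real.pi * s / 2)‖ *
      ‖Complex.Gamma s‖)^2 = 2 * Real.pi := by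
    have : (2 * ‖Complex.cos (Real.pi * s / 2)‖ *
        ‖Complex.Gamma s‖)^2
        = 4 * (‖Complex.cos (Real.pi * s / 2)‖)^2 *
          (‖Complex.Gamma s‖)^2 := by ring
    rw [this, hcos2, hGamma2]
    field_simp
    ring
  calc 2 * ‖Complex.cos (Real.pi * s / 2)‖ * ‖Complex.Gamma s‖
      = Real.sqrt ((2 * ‖Complex.cos (Real.pi * s / 2)‖ *
        ‖Complex.Gamma s‖)^2) := (Real.sqrt_sq hnn).symm
    _ = Real.sqrt (2 * Real.pi) := by rw [hsq]
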